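/- Let (A_t)_{t≥0} be a square-integrable process adapted to (ℱ_t) with A_{t+1} = A_t + (φ*/(t+1))·ΔM_{t+1} + R_{t+1}, where E[ΔM_{t+1}|ℱ_t] = 0, φ* ∈ (0,1], R_t = O(1/t^{1+β}) with β > 0, sup_t E[|A_t|] < ∞, and Σ_t E[(ΔM_{t+1})²]/(t+1)² < ∞. Then sup_t E[A_t²] < ∞ and A_t converges to its almost sure limit A_∞ also in L². -/

import Mathlib

open MeasureTheory Filter Finset
open scoped RealInnerProductSpace Topology ENNReal

set_option maxHeartbeats 1000000 in
/-- Let `(A_t)` be a square-integrable adapted process with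
`A_{t+1} = A_t + (φ*/(t+1))·ΔM_{t+1} + R_{t+1}`, `E[ΔM_{t+1}|ℱ_t] = 0`, `φ* ∈ (0,1]`,
`R_t = O(1/t^{1+β})` with `β > 0`, `sup_t E[|A_t|] < ∞`, and
`Σ_t E[(ΔM_{t+1})²]/(t+1)² < ∞`.  Then `sup_t E[A_t²] < ∞` and `A_t` converges to its
almost sure limit `A_∞` also in `L²`. -/
theorem L2_convergence_of_almost_martingale
    {Ω : Type*} {m0 : MeasurableSpace Ω} {μ : Measure Ω} [IsProbabilityMeasure μ]
    (ℱ : Filtration ℕ m0)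
    (A ΔM R : ℕ → Ω → ℝ) (Ainf : Ω → ℝ)
    (φstar β : ℝ) (hφ0 : 0 < φstar) (hφ1 : φstar ≤ 1) (hβ : 0 < β)
    (hAadp : Adapted ℱ A) (hAsq : ∀ t, MemLp (A t) 2 μ)
    (hMadp : ∀ t, StronglyMeasurable[ℱ (t + 1)] (ΔM (t + 1)))
    (hMsq : ∀ t, MemLp (ΔM t) 2 μ)
    (hMD : ∀ t, μ[ΔM (t + 1) | ℱ t] =ᵐ[μ] 0)
    (hR : ∃ C > (0 : ℝ), ∃ t₀ : ℕ, ∀ t ≥ t₀, ∀ ω, |R t ω| ≤ C / (t : ℝ) ^ (1 + β))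
    (hrec : ∀ t : ℕ, ∀ᵐ ω ∂μ,
      A (t + 1) ω = A t ω + (φstar / ((t : ℝ) + 1)) * ΔM (t + 1) ω + R (t + 1) ω)
    (hbd1 : ∃ K : ℝ, ∀ t, ∫ ω, |A t ω| ∂μ ≤ K)
    (hsum : Summable (fun t : ℕ => (∫ ω, (ΔM (t + 1) ω) ^ 2 ∂μ) / ((t : ℝ) + 1) ^ 2))
    (hlim : ∀ᵐ ω ∂μ, Tendsto (fun t => A t ω) atTop (nhds (Ainf ω))) :
    (∃ K : ℝ, ∀ t, ∫ ω, (A t ω) ^ 2 ∂μ ≤ K) ∧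
    Tendsto (fun t : ℕ => ∫ ω, (A t ω - Ainf ω) ^ 2 ∂μ) atTop (nhds 0) := by
  classical
  obtain ⟨C, hC, t₀, hRbd⟩ := hR
  set c : ℕ → ℝ := fun u => φstar / ((u : ℝ) + 1) with hc_def
  set a : ℕ → Lp ℝ 2 μ := fun t => (hAsq t).toLp (A t) with ha_def
  set m : ℕ → Lp ℝ 2 μ := fun u => (hMsq (u + 1)).toLp (ΔM (u + 1)) with hm_def
  set r : ℕ → Lp ℝ 2 μ := fun u => a (u + 1) - a u - c u • m u with hr_def
  have hacoe : ∀ t, (a t : Ω → ℝ) =ᵐ[μ] A t := fun t => (hAsq t).coeFn_toLp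
  have hmcoe : ∀ u, (m u : Ω → ℝ) =ᵐ[μ] ΔM (u + 1) := fun u => (hMsq (u + 1)).coeFn_toLp
  have hrcoe : ∀ u, (r u : Ω → ℝ) =ᵐ[μ] R (u + 1) := by
    intro u
    have h1 := Lp.coeFn_sub (a (u + 1) - a u) (c u • m u)
    have h2 := Lp.coeFn_sub (a (u + 1)) (a u)
    have h3 := Lp.coeFn_smul (c u) (m u)
    filter_upwards [hrec u, hacoe (u + 1), hacoe u, hmcoe u, h1, h2, h3] with ω
      hrecω hA1 hA0 hM hs1 hs2 hs3
    have : (r u : Ω → ℝ) ω = A (u + 1) ω - A u ω - c u * ΔM (u + 1) ω := by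
      rw [hr_def]
      simp only [hs1, Pi.sub_apply, hs2, hs3, Pi.smul_apply, smul_eq_mul, hA1, hA0, hM]
    rw [this, hrecω]; ring
  clear_value a m r
  -- orthogonality of martingale differences
  have horth : ∀ u v : ℕ, u < v → ∫ ω, ΔM (u + 1) ω * ΔM (v + 1) ω ∂μ = 0 := by
    intro u v huv
    have hm' : ℱ v ≤ m0 := ℱ.le v
    haveI : SigmaFinite (μ.trim hm') := inferInstance
    have hmeas : StronglyMeasurable[ℱ v] (ΔM (u + 1)) := (hMadp u).mono (ℱ.mono huv)
    have hint : Integrable (ΔM (u + 1) * ΔM (v + 1)) μ := by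
      have := (hMsq (v + 1)).smul (hMsq (u + 1)) (p := 2) (q := 2) (r := 1)
      rw [memLp_one_iff_integrable] at this
      exact this
    have h1 : μ[ΔM (u + 1) * ΔM (v + 1) | ℱ v] =ᵐ[μ] ΔM (u + 1) * μ[ΔM (v + 1) | ℱ v] :=
      condExp_mul_of_stronglyMeasurable_left hmeas hint ((hMsq (v + 1)).integrable one_le_two)
    have h3 : ∫ ω, (μ[ΔM (u + 1) * ΔM (v + 1) | ℱ v]) ω ∂μ
        = ∫ ω, ΔM (u + 1) ω * ΔM (v + 1) ω ∂μ := integral_condExp hm'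
    rw [← h3]
    have h4 : (μ[ΔM (u + 1) * ΔM (v + 1) | ℱ v]) =ᵐ[μ] (0 : Ω → ℝ) := by
      filter_upwards [h1, hMD v] with ω hω1 hω2
      simp [hω1, Pi.mul_apply, hω2]
    rw [integral_congr_ae h4]; simp
  -- inner products
  have hinner : ∀ u v : ℕ, u ≠ v → ⟪m u, m v⟫ = (0 : ℝ) := by
    have key : ∀ u v : ℕ, u < v → ⟪m u, m v⟫ = (0 : ℝ) := by
      intro u v huv
      rw [L2.inner_def]
      rw [show ∫ ω, ⟪(m u : Ω → ℝ) ω, (m v : Ω → ℝ) ω⟫ ∂μ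
          = ∫ ω, ΔM (u + 1) ω * ΔM (v + 1) ω ∂μ from
        integral_congr_ae (by
          filter_upwards [hmcoe u, hmcoe v] with ω h1 h2
          simp [RCLike.inner_apply, conj_trivial, h1, h2, mul_comm])]
      exact horth u v huv
    intro u v huv
    rcases lt_or_gt_of_ne huv with h | h
    · exact key u v h
    · rw [real_inner_comm]; exact key v u h
  have hmnorm : ∀ u, ‖m u‖ ^ 2 = ∫ ω, (ΔM (u + 1) ω) ^ 2 ∂μ := by
    intro u
    rw [← real_inner_self_eq_norm_sq, L2.inner_def]
    apply integral_congr_ae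
    filter_upwards [hmcoe u] with ω h1
    simp [RCLike.inner_apply, conj_trivial, h1, pow_two]
  -- summable majorants
  set σ : ℕ → ℝ := fun u => (∫ ω, (ΔM (u + 1) ω) ^ 2 ∂μ) / ((u : ℝ) + 1) ^ 2 with hσ_def
  have hσ : Summable σ := hsum
  have hσ0 : ∀ u, 0 ≤ σ u := fun u =>
    div_nonneg (integral_nonneg fun ω => sq_nonneg _) (by positivity)
  set ρ : ℕ → ℝ := fun u => C / ((u : ℝ) + 1) ^ (1 + β : ℝ) with hρ_def
  have hρ0 : ∀ u, 0 ≤ ρ u := fun u => div_nonneg hC.le (Real.rpow_nonneg (by positivity) _)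
  have hρ : Summable ρ := by
    have h1 : Summable (fun n : ℕ => ((n : ℝ) ^ (1 + β : ℝ))⁻¹) :=
      Real.summable_nat_rpow_inv.2 (by linarith)
    have h2 : Summable (fun n : ℕ => (((n + 1 : ℕ) : ℝ) ^ (1 + β : ℝ))⁻¹) :=
      (summable_nat_add_iff 1).2 h1
    have h3 := h2.mul_left C
    refine h3.congr fun u => ?_
    rw [hρ_def]
    push_cast
    rw [div_eq_mul_inv]
  have hcm : ∀ u, c u ^ 2 * ‖m u‖ ^ 2 ≤ σ u := by
    intro u
    have hpos : (0 : ℝ) < ((u : ℝ) + 1) ^ 2 := by positivity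
    rw [hmnorm u, hc_def, hσ_def]
    simp only
    rw [div_pow, div_mul_eq_mul_div, mul_comm, mul_div_assoc, div_eq_mul_inv (a := (∫ ω, (ΔM (u + 1) ω) ^ 2 ∂μ))]
    have hφsq : φstar ^ 2 ≤ 1 := by nlinarith
    have hnn : 0 ≤ (∫ ω, (ΔM (u + 1) ω) ^ 2 ∂μ) * (((u : ℝ) + 1) ^ 2)⁻¹ := by
      have := integral_nonneg (μ := μ) (f := fun ω => (ΔM (u + 1) ω) ^ 2) (fun ω => sq_nonneg (ΔM (u + 1) ω))
      positivity
    calc (∫ ω, (ΔM (u + 1) ω) ^ 2 ∂μ) * (φstar ^ 2 / ((u : ℝ) + 1) ^ 2)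
        = (∫ ω, (ΔM (u + 1) ω) ^ 2 ∂μ) * (((u : ℝ) + 1) ^ 2)⁻¹ * φstar ^ 2 := by ring
      _ ≤ (∫ ω, (ΔM (u + 1) ω) ^ 2 ∂μ) * (((u : ℝ) + 1) ^ 2)⁻¹ * 1 := by
          exact mul_le_mul_of_nonneg_left hφsq hnn
      _ = (∫ ω, (ΔM (u + 1) ω) ^ 2 ∂μ) * (((u : ℝ) + 1) ^ 2)⁻¹ := by ring
      _ = (∫ ω, (ΔM (u + 1) ω) ^ 2 ∂μ) / ((u : ℝ) + 1) ^ 2 := by rw [div_eq_mul_inv]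
  have hrnorm : ∀ u, t₀ ≤ u → ‖r u‖ ≤ ρ u := by
    intro u hu
    have hbd : ∀ᵐ ω ∂μ, ‖R (u + 1) ω‖ ≤ ρ u := by
      refine ae_of_all _ fun ω => ?_
      have := hRbd (u + 1) (by omega) ω
      rw [Real.norm_eq_abs, hρ_def]
      simpa [Nat.cast_add, Nat.cast_one] using this
    have h1 : eLpNorm (r u : Ω → ℝ) 2 μ = eLpNorm (R (u + 1)) 2 μ := eLpNorm_congr_ae (hrcoe u)
    have h2 : eLpNorm (R (u + 1)) 2 μ ≤ ENNReal.ofReal (ρ u) := by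
      have := eLpNorm_le_of_ae_bound (p := (2 : ℝ≥0∞)) (μ := μ) hbd
      simpa [measure_univ] using this
    rw [Lp.norm_def, h1]
    calc (eLpNorm (R (u + 1)) 2 μ).toReal ≤ (ENNReal.ofReal (ρ u)).toReal :=
          ENNReal.toReal_mono ENNReal.ofReal_ne_top h2
      _ = ρ u := ENNReal.toReal_ofReal (hρ0 u)
  -- norm of martingale sums via orthogonality
  have hsumnorm : ∀ s t : ℕ, ‖∑ u ∈ Finset.Ico s t, c u • m u‖ ^ 2
      = ∑ u ∈ Finset.Ico s t, c u ^ 2 * ‖m u‖ ^ 2 := by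
    intro s t
    rw [← real_inner_self_eq_norm_sq, sum_inner]
    refine Finset.sum_congr rfl fun u hu => ?_
    rw [inner_sum]
    rw [Finset.sum_eq_single u]
    · rw [real_inner_smul_left, real_inner_smul_right, real_inner_self_eq_norm_sq]; ring
    · intro v hv hvu
      rw [real_inner_smul_left, real_inner_smul_right, hinner u v (Ne.symm hvu)]; ring
    · intro hu'; exact absurd hu hu'
  -- tail sums
  have hσtail : ∀ s t : ℕ, ∑ u ∈ Finset.Ico s t, σ u ≤ ∑' k, σ (k + s) := by
    intro s t
    rw [Finset.sum_Ico_eq_sum_range]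
    calc ∑ k ∈ range (t - s), σ (s + k) = ∑ k ∈ range (t - s), σ (k + s) := by
          simp [add_comm]
      _ ≤ ∑' k, σ (k + s) := Summable.sum_le_tsum _ (fun _ _ => hσ0 _) ((summable_nat_add_iff s).2 hσ)
  have hρtail : ∀ s t : ℕ, ∑ u ∈ Finset.Ico s t, ρ u ≤ ∑' k, ρ (k + s) := by
    intro s t
    rw [Finset.sum_Ico_eq_sum_range]
    calc ∑ k ∈ range (t - s), ρ (s + k) = ∑ k ∈ range (t - s), ρ (k + s) := by
          simp [add_comm]
      _ ≤ ∑' k, ρ (k + s) := Summable.sum_le_tsum _ (fun _ _ => hρ0 _) ((summable_nat_add_iff s).2 hρ)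
  -- telescoping
  have htel : ∀ s t : ℕ, s ≤ t → a t = a s + ∑ u ∈ Finset.Ico s t, (c u • m u + r u) := by
    intro s t hst
    induction t, hst using Nat.le_induction with
    | base => rw [Finset.Ico_self, Finset.sum_empty, add_zero]
    | succ t hst ih =>
      rw [Finset.sum_Ico_succ_top hst, ← add_assoc, ← ih, hr_def]
      module
  -- key difference bound
  have hdiff : ∀ s t : ℕ, t₀ ≤ s → s ≤ t →
      ‖a t - a s‖ ≤ Real.sqrt (∑' k, σ (k + s)) + ∑' k, ρ (k + s) := by
    intro s t hs hst
    have h1 : a t - a s = (∑ u ∈ Finset.Ico s t, c u • m u) + ∑ u ∈ Finset.Ico s t, r u := by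
      rw [htel s t hst, Finset.sum_add_distrib]; abel
    rw [h1]
    refine (norm_add_le _ _).trans (add_le_add ?_ ?_)
    · have h2 : ‖∑ u ∈ Finset.Ico s t, c u • m u‖ ^ 2 ≤ ∑' k, σ (k + s) := by
        rw [hsumnorm]
        exact le_trans (Finset.sum_le_sum fun u _ => hcm u) (hσtail s t)
      calc ‖∑ u ∈ Finset.Ico s t, c u • m u‖
          = Real.sqrt (‖∑ u ∈ Finset.Ico s t, c u • m u‖ ^ 2) :=
            (Real.sqrt_sq (norm_nonneg _)).symm
        _ ≤ Real.sqrt (∑' k, σ (k + s)) := Real.sqrt_le_sqrt h2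
    · calc ‖∑ u ∈ Finset.Ico s t, r u‖ ≤ ∑ u ∈ Finset.Ico s t, ‖r u‖ := norm_sum_le _ _
        _ ≤ ∑ u ∈ Finset.Ico s t, ρ u :=
            Finset.sum_le_sum fun u hu => hrnorm u (le_trans hs (Finset.mem_Ico.1 hu).1)
        _ ≤ ∑' k, ρ (k + s) := hρtail s t
  set g : ℕ → ℝ := fun s => Real.sqrt (∑' k, σ (k + s)) + ∑' k, ρ (k + s) with hg_def
  have hgto : Tendsto g atTop (𝓝 0) := by
    have h1 : Tendsto (fun s => ∑' k, σ (k + s)) atTop (𝓝 0) := tendsto_sum_nat_add σ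
    have h2 : Tendsto (fun s => ∑' k, ρ (k + s)) atTop (𝓝 0) := tendsto_sum_nat_add ρ
    have h3 : Tendsto (fun s => Real.sqrt (∑' k, σ (k + s))) atTop (𝓝 (Real.sqrt 0)) :=
      (Real.continuous_sqrt.tendsto 0).comp h1
    rw [Real.sqrt_zero] at h3
    simpa using h3.add h2
  -- Cauchy sequence
  have hcauchy : CauchySeq (fun n => a (n + t₀)) := by
    apply cauchySeq_of_le_tendsto_0 (fun N => 2 * g (N + t₀))
    · intro n m N hn hm
      have hb : ∀ k, N ≤ k → dist (a (k + t₀)) (a (N + t₀)) ≤ g (N + t₀) := by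
        intro k hk
        rw [dist_eq_norm]
        exact hdiff (N + t₀) (k + t₀) (Nat.le_add_left _ _) (by omega)
      calc dist (a (n + t₀)) (a (m + t₀))
          ≤ dist (a (n + t₀)) (a (N + t₀)) + dist (a (N + t₀)) (a (m + t₀)) :=
            dist_triangle _ _ _
        _ ≤ g (N + t₀) + g (N + t₀) := by
            refine add_le_add (hb n hn) ?_
            rw [dist_comm]; exact hb m hm
        _ = 2 * g (N + t₀) := by ring
    · have h1 := hgto.comp (tendsto_add_atTop_nat t₀)
      have := h1.const_mul (2 : ℝ)
      simpa using this
  obtain ⟨L, hL⟩ := cauchySeq_tendsto_of_complete hcauchy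
  have hLa : Tendsto a atTop (𝓝 L) := (tendsto_add_atTop_iff_nat t₀).1 hL
  have hnorm0 : Tendsto (fun t => ‖a t - L‖) atTop (𝓝 0) := by
    have h1 : Tendsto (fun t => a t - L) atTop (𝓝 (L - L)) := hLa.sub tendsto_const_nhds
    rw [sub_self] at h1
    simpa using h1.norm
  -- identification of the limit
  have heLp : Tendsto (fun t => eLpNorm (A t - (L : Ω → ℝ)) 2 μ) atTop (𝓝 0) := by
    have heq : ∀ t, eLpNorm (A t - (L : Ω → ℝ)) 2 μ = ENNReal.ofReal ‖a t - L‖ := by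
      intro t
      have h1 : A t - (L : Ω → ℝ) =ᵐ[μ] ((a t - L : Lp ℝ 2 μ) : Ω → ℝ) := by
        filter_upwards [hacoe t, Lp.coeFn_sub (a t) L] with ω hω1 hω2
        rw [hω2]
        simp only [Pi.sub_apply, hω1]
      rw [eLpNorm_congr_ae h1, Lp.norm_def,
        ENNReal.ofReal_toReal (Lp.eLpNorm_ne_top _)]
    simp_rw [heq]
    have := (ENNReal.continuous_ofReal.tendsto 0).comp hnorm0
    simpa [Function.comp_def] using this
  have hmeas' : TendstoInMeasure μ A atTop (L : Ω → ℝ) :=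
    tendstoInMeasure_of_tendsto_eLpNorm (by norm_num) (fun t => (hAsq t).1)
      (Lp.aestronglyMeasurable L) heLp
  obtain ⟨ns, hns_mono, hns⟩ := hmeas'.exists_seq_tendsto_ae
  have hae : Ainf =ᵐ[μ] (L : Ω → ℝ) := by
    filter_upwards [hns, hlim] with ω h1 h2
    exact tendsto_nhds_unique (h2.comp hns_mono.tendsto_atTop) h1
  -- square integrals as norms
  have hsqnorm : ∀ f : Lp ℝ 2 μ, ∫ ω, (f ω) ^ 2 ∂μ = ‖f‖ ^ 2 := by
    intro f
    rw [← real_inner_self_eq_norm_sq, L2.inner_def]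
    simp_rw [RCLike.inner_apply, conj_trivial, ← pow_two]
  constructor
  · -- boundedness of second moments
    have hbdd : BddAbove (Set.range fun t => ‖a t‖) := by
      have : Tendsto (fun t => ‖a t‖) atTop (𝓝 ‖L‖) := hLa.norm
      exact this.bddAbove_range
    obtain ⟨K, hK⟩ := hbdd
    refine ⟨K ^ 2, fun t => ?_⟩
    have h1 : ∫ ω, (A t ω) ^ 2 ∂μ = ‖a t‖ ^ 2 := by
      rw [← hsqnorm (a t)]
      apply integral_congr_ae
      filter_upwards [hacoe t] with ω hω
      rw [hω]
    rw [h1]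
    have h2 : ‖a t‖ ≤ K := hK ⟨t, rfl⟩
    exact pow_le_pow_left₀ (norm_nonneg _) h2 2
  · -- L² convergence
    have heq : ∀ t, ∫ ω, (A t ω - Ainf ω) ^ 2 ∂μ = ‖a t - L‖ ^ 2 := by
      intro t
      rw [← hsqnorm (a t - L)]
      apply integral_congr_ae
      filter_upwards [hacoe t, hae, Lp.coeFn_sub (a t) L] with ω hω1 hω2 hω3
      rw [hω3]
      simp [hω1, hω2]
    simp_rw [heq]
    have := hnorm0.pow 2
    simpa using this
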